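/- Let T be a two-layer subposet of the Boolean lattice closed under intersection with h ≥ 3 upper nodes of cardinality ℓ, and suppose some lower node S has exactly h predecessors (Situation 2). Let N' be the union of all upper nodes with |N'| = n'. Then h = n' − ℓ + 1, ℓ < n' − 1, every upper node is of the form S ∪ {i} with i ∈ N' \ S, and every lower node other than S has 0 or 1 predecessors. -/
import Mathlib


variable {N : Type*} [DecidableEq N]

/-- Predecessors of a lower node `y`: upper nodes strictly containing `y`. -/
def precs (Upper : Finset (Finset N)) (y : Finset N) : Finset (Finset N) :=
  Upper.filter fun x => y ⊂ x

/-- Situation 2: a two-layer subposet closed under intersection with `h ≥ 3` upper nodes of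
cardinality `ℓ`, in which some lower node `S` has exactly `h` predecessors. Then, with
`N' = ⋃ upper nodes` and `n' = |N'|`: `h = n' − ℓ + 1`, `ℓ < n' − 1`, every upper node is
of the form `S ∪ {i}` with `i ∈ N' \ S`, and every lower node other than `S` has at most
`1` predecessor. -/
theorem situation2_characterization (Upper Lower : Finset (Finset N)) (ℓ : ℕ)
    (hℓ : 2 ≤ ℓ)
    (hU : ∀ x ∈ Upper, x.card = ℓ) (hL : ∀ y ∈ Lower, y.card = ℓ - 1)
    (hclosed : ∀ x ∈ Upper, ∀ x' ∈ Upper, x ≠ x' → x ∩ x' ∈ Lower)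
    (hh : 3 ≤ Upper.card)
    (S : Finset N) (hS : S ∈ Lower) (hSprec : (precs Upper S).card = Upper.card) :
    Upper.card = (Upper.sup id).card - ℓ + 1 ∧
    ℓ < (Upper.sup id).card - 1 ∧
    (∀ x ∈ Upper, ∃ i ∈ (Upper.sup id) \ S, x = insert i S) ∧
    (∀ y ∈ Lower, y ≠ S → (precs Upper y).card ≤ 1) := by
  have hScard : S.card = ℓ - 1 := hL S hS
  -- every upper node strictly contains S
  have hall : ∀ x ∈ Upper, S ⊂ x := by
    have heq : precs Upper S = Upper :=
      Finset.eq_of_subset_of_card_le (Finset.filter_subset _ _) hSprec.ge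
    intro x hx
    have : x ∈ precs Upper S := by rw [heq]; exact hx
    exact (Finset.mem_filter.mp this).2
  -- every upper node is insert i S for some i ∉ S
  have hins : ∀ x ∈ Upper, ∃ i, i ∉ S ∧ x = insert i S := by
    intro x hx
    have hcard1 : (x \ S).card = 1 := by
      rw [Finset.card_sdiff_of_subset (hall x hx).subset, hU x hx, hScard]; omega
    obtain ⟨i, hi⟩ := Finset.card_eq_one.mp hcard1
    have hiS : i ∈ x \ S := hi ▸ Finset.mem_singleton_self i
    refine ⟨i, (Finset.mem_sdiff.mp hiS).2, ?_⟩
    have : S ∪ (x \ S) = x := Finset.union_sdiff_of_subset (hall x hx).subset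
    rw [← this, hi, Finset.insert_eq, Finset.union_comm]
  have hmemsup : ∀ x ∈ Upper, x ⊆ Upper.sup id := fun x hx => Finset.le_sup (f := id) hx
  -- third conjunct
  have third : ∀ x ∈ Upper, ∃ i ∈ (Upper.sup id) \ S, x = insert i S := by
    intro x hx
    obtain ⟨i, hiS, hxi⟩ := hins x hx
    refine ⟨i, Finset.mem_sdiff.mpr ⟨hmemsup x hx ?_, hiS⟩, hxi⟩
    rw [hxi]; exact Finset.mem_insert_self i S
  -- cardinality of Upper equals card of (sup \ S)
  have hcardeq : Upper.card = ((Upper.sup id) \ S).card := by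
    apply Finset.card_bij (fun x hx => (hins x hx).choose)
    · intro x hx
      obtain ⟨i, hi, hxi⟩ := third x hx
      have h1 := (hins x hx).choose_spec
      have : (hins x hx).choose = i := by
        have he : insert ((hins x hx).choose) S = insert i S := by rw [← h1.2, ← hxi]
        have : (hins x hx).choose ∈ insert i S := by
          rw [← he]; exact Finset.mem_insert_self _ _
        rcases Finset.mem_insert.mp this with h | h
        · exact h
        · exact absurd h h1.1
      rw [this]; exact hi
    · intro x hx x' hx' h
      have h1 := (hins x hx).choose_spec
      have h2 := (hins x' hx').choose_spec
      rw [h1.2, h2.2, h]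
    · intro b hb
      obtain ⟨hbsup, hbS⟩ := Finset.mem_sdiff.mp hb
      obtain ⟨x, hx, hbx⟩ := Finset.mem_sup.mp hbsup
      refine ⟨x, hx, ?_⟩
      have h1 := (hins x hx).choose_spec
      have : b ∈ insert (hins x hx).choose S := by rw [← h1.2]; exact hbx
      rcases Finset.mem_insert.mp this with h | h
      · exact h.symm
      · exact absurd h hbS
  have hSsup : S ⊆ Upper.sup id := by
    obtain ⟨x, hx⟩ := Finset.card_pos.mp (by omega : 0 < Upper.card)
    exact (hall x hx).subset.trans (hmemsup x hx)
  have hsupc : ((Upper.sup id) \ S).card + S.card = (Upper.sup id).card :=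
    Finset.card_sdiff_add_card_eq_card hSsup
  refine ⟨by omega, by omega, third, ?_⟩
  -- last conjunct
  intro y hy hyS
  rw [Finset.card_le_one]
  intro x hx x' hx'
  by_contra hne
  have hxU := (Finset.mem_filter.mp hx).1
  have hx'U := (Finset.mem_filter.mp hx').1
  have hyx := (Finset.mem_filter.mp hx).2
  have hyx' := (Finset.mem_filter.mp hx').2
  obtain ⟨i, hiS, hxi⟩ := hins x hxU
  obtain ⟨j, hjS, hxj⟩ := hins x' hx'U
  have hij : i ≠ j := fun h => hne (by rw [hxi, hxj, h])
  have hinter : x ∩ x' ⊆ S := by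
    intro a ha
    obtain ⟨ha1, ha2⟩ := Finset.mem_inter.mp ha
    rcases Finset.mem_insert.mp (hxi ▸ ha1) with h | h
    · rcases Finset.mem_insert.mp (hxj ▸ ha2) with h' | h'
      · exact absurd (h ▸ h') hij
      · exact h'
    · exact h
  have hysub : y ⊆ S := (Finset.subset_inter hyx.subset hyx'.subset).trans hinter
  exact hyS (Finset.eq_of_subset_of_card_le hysub (by rw [hScard, hL y hy]))
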